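/- Let a > 0, N ∈ ℕ, A an N×N real matrix, and M : [0,a) → Mat(N,ℝ) continuous with r·‖M(r)‖ = o(1) as r → 0⁺. Let λ be the smallest real number such that ⟨φ, Aφ⟩ ≤ λ‖φ‖² for all φ ∈ ℝᴺ. Suppose φ : (0,a) → ℝᴺ is differentiable, solves φ'(r) = r⁻¹·A·φ(r) + M(r)·φ(r), and satisfies φ(r) = O(r^{λ+ε}) as r → 0⁺ for some ε > 0. Then φ ≡ 0 on (0,a). -/
import Mathlib


open scoped RealInnerProductSpace

/-- Fuchsian ODE lemma: a solution of the Fuchsian system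
`φ' = r⁻¹ A φ + M(r) φ` on `(0,a)` which is `O(r^{λ+ε})` near `r = 0`, where `λ` is the
smallest number with `⟨φ, Aφ⟩ ≤ λ ‖φ‖²`, vanishes identically. -/
theorem fuchsian_ode_uniqueness {N : ℕ} {a : ℝ} (ha : 0 < a)
    (A : EuclideanSpace ℝ (Fin N) →L[ℝ] EuclideanSpace ℝ (Fin N))
    (M : ℝ → (EuclideanSpace ℝ (Fin N) →L[ℝ] EuclideanSpace ℝ (Fin N)))
    (hMcont : ContinuousOn M (Set.Ico 0 a))
    (hMo : (fun r => r * ‖M r‖) =o[nhdsWithin 0 (Set.Ioi 0)] (fun _ => (1 : ℝ)))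
    (lam : ℝ)
    (hlam : IsLeast {l : ℝ | ∀ φ : EuclideanSpace ℝ (Fin N), ⟪φ, A φ⟫ ≤ l * ‖φ‖ ^ 2} lam)
    (φ : ℝ → EuclideanSpace ℝ (Fin N))
    (hφ : ∀ r ∈ Set.Ioo 0 a, HasDerivAt φ (r⁻¹ • A (φ r) + M r (φ r)) r)
    (ε : ℝ) (hε : 0 < ε)
    (hO : φ =O[nhdsWithin 0 (Set.Ioi 0)] fun r => r ^ (lam + ε)) :
    ∀ r ∈ Set.Ioo 0 a, φ r = 0 := by
  obtain ⟨C, hC⟩ := hO.bound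
  -- combine the two smallness conditions near 0
  have hev : {s : ℝ | s * ‖M s‖ ≤ ε / 2 ∧ ‖φ s‖ ≤ C * ‖s ^ (lam + ε)‖} ∈
      nhdsWithin 0 (Set.Ioi 0) := by
    filter_upwards [hMo.def (half_pos hε), hC] with s h1 h2
    refine ⟨?_, h2⟩
    calc s * ‖M s‖ ≤ |s * ‖M s‖| := le_abs_self _
      _ ≤ ε / 2 := by simpa only [Real.norm_eq_abs, norm_one, mul_one] using h1
  obtain ⟨t0, ht0, hsub⟩ := mem_nhdsGT_iff_exists_Ioc_subset.mp hev
  set r1 : ℝ := min t0 (a / 2) with hr1def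
  have hr1pos : 0 < r1 := lt_min ht0 (half_pos ha)
  have hr1a : r1 < a := lt_of_le_of_lt (min_le_right _ _) (half_lt_self ha)
  have hr1mem : r1 ∈ Set.Ioo 0 a := ⟨hr1pos, hr1a⟩
  -- consequences on (0, r1]
  have hM1 : ∀ s ∈ Set.Ioc (0:ℝ) r1, 2 * ‖M s‖ ≤ ε * s⁻¹ := by
    intro s hs
    have := (hsub ⟨hs.1, le_trans hs.2 (min_le_left _ _)⟩).1
    have hs0 : 0 < s := hs.1
    have h2 : 2 * ‖M s‖ * s ≤ ε := by
      calc 2 * ‖M s‖ * s = 2 * (s * ‖M s‖) := by ring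
        _ ≤ 2 * (ε / 2) := by linarith
        _ = ε := by ring
    have hsi : 0 < s⁻¹ := inv_pos.mpr hs0
    calc 2 * ‖M s‖ = 2 * ‖M s‖ * s * s⁻¹ := (mul_inv_cancel_right₀ (ne_of_gt hs0) _).symm
      _ ≤ ε * s⁻¹ := mul_le_mul_of_nonneg_right h2 hsi.le
  have hφ1 : ∀ s ∈ Set.Ioc (0:ℝ) r1, ‖φ s‖ ≤ C * s ^ (lam + ε) := by
    intro s hs
    have := (hsub ⟨hs.1, le_trans hs.2 (min_le_left _ _)⟩).2
    rwa [Real.norm_eq_abs, abs_of_pos (Real.rpow_pos_of_pos hs.1 _)] at this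
  -- the integrand
  set h : ℝ → ℝ := fun t => 2 * lam / t + 2 * ‖M t‖ with hh
  have hcont : ContinuousOn h (Set.Ioo 0 a) := by
    apply ContinuousOn.add
    · exact continuousOn_const.div continuousOn_id fun t ht => ne_of_gt ht.1
    · exact continuousOn_const.mul ((hMcont.mono fun t ht => ⟨le_of_lt ht.1, ht.2⟩).norm)
  have hint : ∀ s ∈ Set.Ioo (0:ℝ) a, ∀ t ∈ Set.Ioo (0:ℝ) a,
      IntervalIntegrable h MeasureTheory.volume s t := fun s hs t ht =>
    (hcont.mono (Set.ordConnected_Ioo.uIcc_subset hs ht)).intervalIntegrable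
  set F : ℝ → ℝ := fun t => ∫ u in r1..t, h u with hF
  set g : ℝ → ℝ := fun t => ⟪φ t, φ t⟫ * Real.exp (-F t) with hg
  -- derivative of g is nonpositive on (0,a)
  have key : ∀ t ∈ Set.Ioo (0:ℝ) a, ∃ d, HasDerivAt g d t ∧ d ≤ 0 := by
    intro t ht
    have ht0 : 0 < t := ht.1
    have hFd : HasDerivAt F (h t) t := by
      refine intervalIntegral.integral_hasDerivAt_right (hint r1 hr1mem t ht)
        ⟨Set.Ioo 0 a, IsOpen.mem_nhds isOpen_Ioo ht, hcont.aestronglyMeasurable measurableSet_Ioo⟩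
        (hcont.continuousAt (IsOpen.mem_nhds isOpen_Ioo ht))
    have hexp : HasDerivAt (fun u => Real.exp (-F u)) (Real.exp (-F t) * -h t) t :=
      (hFd.neg).exp
    set D := t⁻¹ • A (φ t) + M t (φ t) with hD
    have hfd : HasDerivAt (fun u => (⟪φ u, φ u⟫ : ℝ)) (⟪φ t, D⟫ + ⟪D, φ t⟫) t :=
      HasDerivAt.inner ℝ (hφ t ht) (hφ t ht)
    have hgd : HasDerivAt g ((⟪φ t, D⟫ + ⟪D, φ t⟫) * Real.exp (-F t)
        + ⟪φ t, φ t⟫ * (Real.exp (-F t) * -h t)) t := hfd.mul hexp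
    refine ⟨_, hgd, ?_⟩
    have hinn : (⟪φ t, D⟫ + ⟪D, φ t⟫ : ℝ) ≤ h t * ⟪φ t, φ t⟫ := by
      rw [real_inner_comm (φ t) D]
      have hsplit : (⟪φ t, D⟫ : ℝ) = t⁻¹ * ⟪φ t, A (φ t)⟫ + ⟪φ t, M t (φ t)⟫ := by
        rw [hD, inner_add_right, real_inner_smul_right]
      have h1 : (⟪φ t, A (φ t)⟫ : ℝ) ≤ lam * ‖φ t‖ ^ 2 := hlam.1 (φ t)
      have h2 : (⟪φ t, M t (φ t)⟫ : ℝ) ≤ ‖M t‖ * ‖φ t‖ ^ 2 := by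
        calc (⟪φ t, M t (φ t)⟫ : ℝ) ≤ ‖φ t‖ * ‖M t (φ t)‖ := real_inner_le_norm _ _
          _ ≤ ‖φ t‖ * (‖M t‖ * ‖φ t‖) := by
              have := (M t).le_opNorm (φ t)
              nlinarith [norm_nonneg (φ t)]
          _ = ‖M t‖ * ‖φ t‖ ^ 2 := by ring
      have hself : (⟪φ t, φ t⟫ : ℝ) = ‖φ t‖ ^ 2 := real_inner_self_eq_norm_sq _
      rw [hsplit, hself, hh]
      have hti : 0 < t⁻¹ := inv_pos.mpr ht0
      have : t⁻¹ * ⟪φ t, A (φ t)⟫ ≤ t⁻¹ * (lam * ‖φ t‖ ^ 2) :=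
        mul_le_mul_of_nonneg_left h1 hti.le
      have hdiv : 2 * lam / t = 2 * (t⁻¹ * lam) := by field_simp
      nlinarith [this, h2]
    have hE : 0 < Real.exp (-F t) := Real.exp_pos _
    nlinarith [hinn, hE]
  -- g is antitone on (0,a)
  have hanti : AntitoneOn g (Set.Ioo 0 a) := by
    refine antitoneOn_of_deriv_nonpos (convex_Ioo 0 a) ?_ ?_ ?_
    · intro t ht
      obtain ⟨d, hd, _⟩ := key t ht
      exact hd.continuousAt.continuousWithinAt
    · intro t ht
      rw [interior_Ioo] at ht
      obtain ⟨d, hd, _⟩ := key t ht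
      exact hd.differentiableAt.differentiableWithinAt
    · intro t ht
      rw [interior_Ioo] at ht
      obtain ⟨d, hd, hd0⟩ := key t ht
      rw [hd.deriv]; exact hd0
  -- bound g near 0
  set K : ℝ := C ^ 2 * Real.exp ((2 * lam + ε) * Real.log r1) with hK
  have hbound : ∀ s ∈ Set.Ioc (0:ℝ) r1, g s ≤ K * Real.exp (ε * Real.log s) := by
    intro s hs
    have hs0 : 0 < s := hs.1
    have hsa : s ∈ Set.Ioo (0:ℝ) a := ⟨hs0, lt_of_le_of_lt hs.2 hr1a⟩
    have hsub2 : Set.uIcc s r1 ⊆ Set.Ioo (0:ℝ) a :=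
      Set.ordConnected_Ioo.uIcc_subset hsa hr1mem
    -- integral bound
    have hFs : -F s = ∫ u in s..r1, h u := by
      show -(∫ u in r1..s, h u) = _
      rw [intervalIntegral.integral_symm s r1, neg_neg]
    have hIcc : Set.Icc s r1 ⊆ Set.Ioc (0:ℝ) r1 := fun u hu => ⟨lt_of_lt_of_le hs0 hu.1, hu.2⟩
    have hint1 : IntervalIntegrable (fun u : ℝ => 2 * lam / u) MeasureTheory.volume s r1 := by
      refine ContinuousOn.intervalIntegrable ?_
      exact (continuousOn_const.div continuousOn_id fun u hu => ne_of_gt (hsub2 hu).1)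
    have hint2 : IntervalIntegrable (fun u : ℝ => 2 * ‖M u‖) MeasureTheory.volume s r1 := by
      refine ContinuousOn.intervalIntegrable ?_
      exact continuousOn_const.mul
        (((hMcont.mono fun u hu => ⟨le_of_lt hu.1, hu.2⟩).norm).mono hsub2)
    have hint3 : IntervalIntegrable (fun u : ℝ => ε * u⁻¹) MeasureTheory.volume s r1 := by
      refine ContinuousOn.intervalIntegrable ?_
      exact continuousOn_const.mul ((continuousOn_id.inv₀ fun u hu => ne_of_gt (hsub2 hu).1))
    have hnot : (0:ℝ) ∉ Set.uIcc s r1 := fun hmem => (lt_irrefl (0:ℝ)) (hsub2 hmem).1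
    have hlog : ∫ u in s..r1, u⁻¹ = Real.log (r1 / s) := integral_inv hnot
    have hI1 : ∫ u in s..r1, 2 * lam / u = 2 * lam * Real.log (r1 / s) := by
      have : ∀ u : ℝ, 2 * lam / u = 2 * lam * u⁻¹ := fun u => by rw [div_eq_mul_inv]
      simp_rw [this]
      rw [intervalIntegral.integral_const_mul, hlog]
    have hI2 : ∫ u in s..r1, 2 * ‖M u‖ ≤ ε * Real.log (r1 / s) := by
      have hmono : ∫ u in s..r1, 2 * ‖M u‖ ≤ ∫ u in s..r1, ε * u⁻¹ := by
        refine intervalIntegral.integral_mono_on hs.2 hint2 hint3 fun u hu => ?_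
        exact hM1 u (hIcc hu)
      calc ∫ u in s..r1, 2 * ‖M u‖ ≤ ∫ u in s..r1, ε * u⁻¹ := hmono
        _ = ε * Real.log (r1 / s) := by rw [intervalIntegral.integral_const_mul, hlog]
    have hIsum : ∫ u in s..r1, h u = (∫ u in s..r1, 2 * lam / u) + ∫ u in s..r1, 2 * ‖M u‖ := by
      rw [hh, intervalIntegral.integral_add hint1 hint2]
    have hFbound : -F s ≤ (2 * lam + ε) * Real.log (r1 / s) := by
      rw [hFs, hIsum, hI1]; nlinarith [hI2]
    -- norm bound
    have hns : ‖φ s‖ ≤ C * s ^ (lam + ε) := hφ1 s hs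
    have hCpos : 0 ≤ C * s ^ (lam + ε) := le_trans (norm_nonneg _) hns
    have hf : (⟪φ s, φ s⟫ : ℝ) ≤ (C * s ^ (lam + ε)) ^ 2 := by
      rw [real_inner_self_eq_norm_sq]
      exact pow_le_pow_left₀ (norm_nonneg _) hns 2
    have hrpow : s ^ (lam + ε) = Real.exp ((lam + ε) * Real.log s) := by
      rw [Real.rpow_def_of_pos hs0, mul_comm]
    have hgE : 0 < Real.exp (-F s) := Real.exp_pos _
    calc g s ≤ (C * s ^ (lam + ε)) ^ 2 * Real.exp (-F s) := by
          exact mul_le_mul_of_nonneg_right hf hgE.le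
      _ ≤ (C * s ^ (lam + ε)) ^ 2 * Real.exp ((2 * lam + ε) * Real.log (r1 / s)) := by
          refine mul_le_mul_of_nonneg_left (Real.exp_le_exp.mpr hFbound) (by positivity)
      _ = K * Real.exp (ε * Real.log s) := by
          rw [hrpow, Real.log_div (ne_of_gt hr1pos) (ne_of_gt hs0), hK, mul_pow,
            ← Real.exp_nat_mul]
          rw [mul_assoc, mul_assoc, ← Real.exp_add, ← Real.exp_add]
          congr 1
          push_cast
          ring_nf
  -- limit of the bound as s → 0⁺
  have htend : Filter.Tendsto (fun s : ℝ => K * Real.exp (ε * Real.log s))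
      (nhdsWithin 0 (Set.Ioi 0)) (nhds 0) := by
    have h1 : Filter.Tendsto Real.log (nhdsWithin 0 (Set.Ioi 0)) Filter.atBot :=
      Real.tendsto_log_nhdsGT_zero
    have h2 : Filter.Tendsto (fun s : ℝ => ε * Real.log s) (nhdsWithin 0 (Set.Ioi 0))
        Filter.atBot := Filter.Tendsto.const_mul_atBot hε h1
    have h3 : Filter.Tendsto (fun s : ℝ => Real.exp (ε * Real.log s))
        (nhdsWithin 0 (Set.Ioi 0)) (nhds 0) := Real.tendsto_exp_atBot.comp h2
    simpa using h3.const_mul K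
  -- conclude
  intro r hr
  have hgr0 : g r ≤ 0 := by
    refine ge_of_tendsto htend ?_
    have hmin : 0 < min r r1 := lt_min hr.1 hr1pos
    filter_upwards [Ioc_mem_nhdsGT_of_mem (Set.mem_Ico.mpr ⟨le_refl (0:ℝ), hmin⟩)] with s hs
    have hs1 : s ∈ Set.Ioc (0:ℝ) r1 := ⟨hs.1, le_trans hs.2 (min_le_right _ _)⟩
    have hsa : s ∈ Set.Ioo (0:ℝ) a := ⟨hs.1, lt_of_le_of_lt hs1.2 hr1a⟩
    have hsr : s ≤ r := le_trans hs.2 (min_le_left _ _)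
    exact le_trans (hanti hsa hr hsr) (hbound s hs1)
  have hgrnn : 0 ≤ g r := mul_nonneg real_inner_self_nonneg (Real.exp_pos _).le
  have hzero : (⟪φ r, φ r⟫ : ℝ) = 0 := by
    have : g r = 0 := le_antisymm hgr0 hgrnn
    rw [hg] at this
    rcases mul_eq_zero.mp this with h | h
    · exact h
    · exact absurd h (ne_of_gt (Real.exp_pos _))
  exact inner_self_eq_zero.mp hzero
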